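/- Fix I, S, J ≥ 1, β > 0, inspection indices i = 1,…,I, groups s = 1,…,S with stress vectors x_s ∈ ℝ^J, and integers 0 ≤ n_{is} ≤ K_{is} with K_{is} ≥ 1 and K = Σ_{i,s} K_{is}. For θ = (η, α) ∈ ℝ^I × ℝ^J set γ(y) = 1 − exp(−exp(y)), G_i(η) = ∏_{m=i}^{I} γ(η_m), λ_s(α) = exp(Σ_{j} α_j x_{sj}), R_{is}(θ) = (1 − G_i(η))^{λ_s(α)}, π_{is1}(θ) = 1 − R_{is}(θ), π_{is2}(θ) = R_{is}(θ), and define the objective F(θ) = Σ_{i,s} (K_{is}/K) [ π_{is1}^{β+1} + π_{is2}^{β+1} − ((β+1)/β)( (n_{is}/K_{is}) π_{is1}^{β} + ((K_{is}−n_{is})/K_{is}) π_{is2}^{β} ) ]. Then for each u ∈ {1,…,I}: ∂F/∂η_u (θ) = −((β+1)/K) Σ_{i,s} δ^{η}_{is,u}(θ) ( K_{is} π_{is1}(θ) − n_{is} ) [ π_{is1}(θ)^{β−1} + π_{is2}(θ)^{β−1} ], where δ^{η}_{is,u}(θ) = −(1 − G_i(η))^{λ_s(α) − 1} λ_s(α)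 · ∂G_i/∂η_u(η) (and ∂G_i/∂η_u(η) = exp(η_u)exp(−exp(η_u)) G_i(η)/γ(η_u) if i ≤ u and 0 otherwise); and for each j ∈ {1,…,J}: ∂F/∂α_j (θ) = −((β+1)/K) Σ_{i,s} δ^{α}_{is,j}(θ) ( K_{is} π_{is1}(θ) − n_{is} ) [ π_{is1}(θ)^{β−1} + π_{is2}(θ)^{β−1} ], where δ^{α}_{is,j}(θ) = (1 − G_i(η))^{λ_s(α)} log(1 − G_i(η)) λ_s(α) x_{sj}. Consequently, θ is a critical point of F if and only if the estimating equations Σ_{i,s} δ^{η}_{is,u}(θ)(K_{is}(1 − R_{is}(θ)) − n_{is})[(1 − R_{is}(θ))^{β−1} + R_{is}(θ)^{β−1}] = 0 for all u and Σ_{i,s} δ^{α}_{is,j}(θ)(K_{is}(1 − R_{is}(θ)) − n_{is})[(1 − R_{is}(θ))^{β−1} + R_{is}(θ)^{β−1}] = 0 for all j hold. -/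

import Mathlib

open Finset

lemma cell_deriv {β : ℝ} (hβ : 0 < β) {Kc nc Kt : ℝ} (hKc : Kc ≠ 0) (hKt : Kt ≠ 0)
    {f : ℝ → ℝ} {t d : ℝ} (hf : HasDerivAt f d t) (h0 : 0 < f t) (h1 : f t < 1) :
    HasDerivAt (fun τ => (Kc / Kt) * ((1 - f τ) ^ (β + 1) + (f τ) ^ (β + 1)
        - ((β + 1) / β) * ((nc / Kc) * (1 - f τ) ^ β + ((Kc - nc) / Kc) * (f τ) ^ β)))
      (-((β + 1) / Kt) * (d * (Kc * (1 - f t) - nc) *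
        ((1 - f t) ^ (β - 1) + (f t) ^ (β - 1)))) t := by
  have hb0 : (0:ℝ) < 1 - f t := by linarith
  have hbne : (1:ℝ) - f t ≠ 0 := ne_of_gt hb0
  have hfne : f t ≠ 0 := ne_of_gt h0
  have h1f : HasDerivAt (fun τ => 1 - f τ) (-d) t := by
    exact hf.const_sub 1
  have hA := h1f.rpow_const (p := β + 1) (Or.inl hbne)
  have hB := hf.rpow_const (p := β + 1) (Or.inl hfne)
  have hC := h1f.rpow_const (p := β) (Or.inl hbne)
  have hD := hf.rpow_const (p := β) (Or.inl hfne)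
  have hmain := (((hA.add hB).sub
    (((hC.const_mul (nc / Kc)).add (hD.const_mul ((Kc - nc) / Kc))).const_mul
      ((β + 1) / β)))).const_mul (Kc / Kt)
  refine hmain.congr_deriv ?_
  have e1 : (1 - f t) ^ β = (1 - f t) ^ (β - 1) * (1 - f t) := by
    rw [← Real.rpow_add_one hbne, sub_add_cancel]
  have e2 : (f t) ^ β = (f t) ^ (β - 1) * f t := by
    rw [← Real.rpow_add_one hfne, sub_add_cancel]
  rw [show β + 1 - 1 = β from by ring, e1, e2]
  field_simp
  ring

/-- Estimating equations for the weighted minimum DPD estimator under the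
proportional hazards model: the partial derivatives of the weighted DPD objective `F`
with respect to `η_u` and `α_j`, and the characterization of critical points of `F`
by the estimating equations. -/
theorem stmt_8 {I S J : ℕ} (hI : 1 ≤ I) (hS : 1 ≤ S) (hJ : 1 ≤ J)
    (β : ℝ) (hβ : 0 < β)
    (x : Fin S → Fin J → ℝ)
    (n K : Fin I → Fin S → ℕ)
    (hK : ∀ i s, 1 ≤ K i s) (hn : ∀ i s, n i s ≤ K i s)
    (Ktot : ℕ) (hKtot : Ktot = ∑ i, ∑ s, K i s)
    (γ : ℝ → ℝ) (hγ : ∀ y, γ y = 1 - Real.exp (-Real.exp y))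
    (G : (Fin I → ℝ) → Fin I → ℝ)
    (hG : ∀ η i, G η i = ∏ m ∈ Finset.Ici i, γ (η m))
    (lam : (Fin J → ℝ) → Fin S → ℝ)
    (hlam : ∀ α s, lam α s = Real.exp (∑ j, α j * x s j))
    (R : (Fin I → ℝ) → (Fin J → ℝ) → Fin I → Fin S → ℝ)
    (hR : ∀ η α i s, R η α i s = (1 - G η i) ^ (lam α s))
    (F : (Fin I → ℝ) → (Fin J → ℝ) → ℝ)
    (hF : ∀ η α, F η α = ∑ i, ∑ s, ((K i s : ℝ) / (Ktot : ℝ)) *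
        ((1 - R η α i s) ^ (β + 1) + (R η α i s) ^ (β + 1)
          - ((β + 1) / β) * (((n i s : ℝ) / (K i s : ℝ)) * (1 - R η α i s) ^ β
              + (((K i s : ℝ) - (n i s : ℝ)) / (K i s : ℝ)) * (R η α i s) ^ β)))
    (dG : (Fin I → ℝ) → Fin I → Fin I → ℝ)
    (hdG : ∀ η i u, dG η i u =
      if i ≤ u then Real.exp (η u) * Real.exp (-Real.exp (η u)) * G η i / γ (η u) else 0)
    (δη : (Fin I → ℝ) → (Fin J → ℝ) → Fin I → Fin S → Fin I → ℝ)
    (hδη : ∀ η α i s u, δη η α i s u = -(1 - G η i) ^ (lam α s - 1) * lam α s * dG η i u)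
    (δα : (Fin I → ℝ) → (Fin J → ℝ) → Fin I → Fin S → Fin J → ℝ)
    (hδα : ∀ η α i s j, δα η α i s j =
      (1 - G η i) ^ (lam α s) * Real.log (1 - G η i) * lam α s * x s j)
    (η : Fin I → ℝ) (α : Fin J → ℝ) :
    (∀ u : Fin I,
      HasDerivAt (fun t => F (Function.update η u t) α)
        (-((β + 1) / (Ktot : ℝ)) * ∑ i, ∑ s,
          δη η α i s u * ((K i s : ℝ) * (1 - R η α i s) - (n i s : ℝ)) *
            ((1 - R η α i s) ^ (β - 1) + (R η α i s) ^ (β - 1))) (η u)) ∧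
    (∀ j : Fin J,
      HasDerivAt (fun t => F η (Function.update α j t))
        (-((β + 1) / (Ktot : ℝ)) * ∑ i, ∑ s,
          δα η α i s j * ((K i s : ℝ) * (1 - R η α i s) - (n i s : ℝ)) *
            ((1 - R η α i s) ^ (β - 1) + (R η α i s) ^ (β - 1))) (α j)) ∧
    (((∀ u : Fin I, HasDerivAt (fun t => F (Function.update η u t) α) 0 (η u)) ∧
      (∀ j : Fin J, HasDerivAt (fun t => F η (Function.update α j t)) 0 (α j))) ↔
     ((∀ u : Fin I, ∑ i, ∑ s,
          δη η α i s u * ((K i s : ℝ) * (1 - R η α i s) - (n i s : ℝ)) *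
            ((1 - R η α i s) ^ (β - 1) + (R η α i s) ^ (β - 1)) = 0) ∧
      (∀ j : Fin J, ∑ i, ∑ s,
          δα η α i s j * ((K i s : ℝ) * (1 - R η α i s) - (n i s : ℝ)) *
            ((1 - R η α i s) ^ (β - 1) + (R η α i s) ^ (β - 1)) = 0))) := by
  -- basic positivity facts
  have hγpos : ∀ y, 0 < γ y := by
    intro y; rw [hγ]
    have : Real.exp (-Real.exp y) < 1 := by
      rw [Real.exp_lt_one_iff]
      simpa using Real.exp_pos y
    linarith
  have hγlt : ∀ y, γ y < 1 := by
    intro y; rw [hγ]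
    have : 0 < Real.exp (-Real.exp y) := Real.exp_pos _
    linarith
  have hGpos : ∀ (η' : Fin I → ℝ) i, 0 < G η' i := by
    intro η' i; rw [hG]
    exact Finset.prod_pos fun m _ => hγpos _
  have hGlt : ∀ (η' : Fin I → ℝ) i, G η' i < 1 := by
    intro η' i; rw [hG]
    have hi : i ∈ Finset.Ici i := Finset.mem_Ici.mpr le_rfl
    rw [← Finset.mul_prod_erase _ _ hi]
    calc γ (η' i) * ∏ m ∈ (Finset.Ici i).erase i, γ (η' m)
        ≤ γ (η' i) * 1 := by
          refine mul_le_mul_of_nonneg_left ?_ (le_of_lt (hγpos _))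
          exact Finset.prod_le_one (fun m _ => le_of_lt (hγpos _))
            (fun m _ => le_of_lt (hγlt _))
      _ < 1 := by simpa using hγlt (η' i)
  have hbase : ∀ i, (0:ℝ) < 1 - G η i := fun i => by linarith [hGlt η i]
  have hlampos : ∀ (α' : Fin J → ℝ) s, 0 < lam α' s := by
    intro α' s; rw [hlam]; exact Real.exp_pos _
  have hRpos : ∀ i s, 0 < R η α i s := by
    intro i s; rw [hR]; exact Real.rpow_pos_of_pos (hbase i) _
  have hRlt : ∀ i s, R η α i s < 1 := by
    intro i s; rw [hR]
    exact Real.rpow_lt_one (le_of_lt (hbase i)) (by linarith [hGpos η i]) (hlampos α s)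
  have hKpos : ∀ i s, (0:ℝ) < (K i s : ℝ) := fun i s => by
    exact_mod_cast Nat.lt_of_lt_of_le Nat.zero_lt_one (hK i s)
  have hKtpos : (0:ℝ) < (Ktot : ℝ) := by
    have : 0 < Ktot := by
      rw [hKtot]
      refine Finset.sum_pos (fun i _ => Finset.sum_pos (fun s _ => hK i s) ?_) ?_
      · exact ⟨⟨0, hS⟩, Finset.mem_univ _⟩
      · exact ⟨⟨0, hI⟩, Finset.mem_univ _⟩
    exact_mod_cast this
  have hKtne : (Ktot : ℝ) ≠ 0 := ne_of_gt hKtpos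
  -- derivative of R in the η-direction
  have hRdη : ∀ (u : Fin I) (i : Fin I) (s : Fin S),
      HasDerivAt (fun t => R (Function.update η u t) α i s) (δη η α i s u) (η u) := by
    intro u i s
    by_cases hiu : i ≤ u
    · set C := ∏ m ∈ (Finset.Ici i).erase u, γ (η m) with hC
      have hmem : u ∈ Finset.Ici i := Finset.mem_Ici.mpr hiu
      have hGt : ∀ t, G (Function.update η u t) i = γ t * C := by
        intro t
        rw [hG, ← Finset.mul_prod_erase _ _ hmem]
        congr 1
        · simp
        · exact Finset.prod_congr rfl fun m hm => by
            rw [Function.update_of_ne (Finset.ne_of_mem_erase hm)]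
      have hGη : G η i = γ (η u) * C := by
        rw [hG, ← Finset.mul_prod_erase _ _ hmem]
      have hγd : HasDerivAt γ (Real.exp (η u) * Real.exp (-Real.exp (η u))) (η u) := by
        have hfg : γ = fun y => 1 - Real.exp (-Real.exp y) := funext hγ
        rw [hfg]
        have h1 : HasDerivAt (fun y : ℝ => -Real.exp y) (-Real.exp (η u)) (η u) :=
          (Real.hasDerivAt_exp (η u)).neg
        have h2 := h1.exp
        have h3 := (hasDerivAt_const (η u) (1:ℝ)).sub h2
        refine h3.congr_deriv ?_; ring
      have hGd : HasDerivAt (fun t => G (Function.update η u t) i)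
          (Real.exp (η u) * Real.exp (-Real.exp (η u)) * C) (η u) := by
        have h := hγd.mul_const C
        have hfun : (fun t => G (Function.update η u t) i) = fun t => γ t * C :=
          funext hGt
        rw [hfun]; exact h
      have hbd : HasDerivAt (fun t => 1 - G (Function.update η u t) i)
          (-(Real.exp (η u) * Real.exp (-Real.exp (η u)) * C)) (η u) := by
        exact hGd.const_sub 1
      have hval : (1:ℝ) - G (Function.update η u (η u)) i = 1 - G η i := by
        rw [Function.update_eq_self]
      have hRd := hbd.rpow_const (p := lam α s)
        (Or.inl (by rw [hval]; exact ne_of_gt (hbase i)))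
      have hfun : (fun t => R (Function.update η u t) α i s)
          = fun t => (1 - G (Function.update η u t) i) ^ (lam α s) :=
        funext fun t => by rw [hR]
      rw [hfun]
      convert hRd using 1
      rw [hval, hδη, hdG, if_pos hiu, hGη]
      have hγne : γ (η u) ≠ 0 := ne_of_gt (hγpos (η u))
      field_simp
    · have hfun : (fun t => R (Function.update η u t) α i s) = fun _ => R η α i s := by
        funext t
        rw [hR, hR]
        congr 2
        rw [hG, hG]
        refine Finset.prod_congr rfl fun m hm => ?_
        have : m ≠ u := fun h => hiu (h ▸ Finset.mem_Ici.mp hm)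
        rw [Function.update_of_ne this]
      rw [hfun, hδη, hdG, if_neg hiu, mul_zero]
      exact hasDerivAt_const _ _
  -- derivative of R in the α-direction
  have hRdα : ∀ (j : Fin J) (i : Fin I) (s : Fin S),
      HasDerivAt (fun t => R η (Function.update α j t) i s) (δα η α i s j) (α j) := by
    intro j i s
    set c := ∑ m ∈ Finset.univ.erase j, α m * x s m with hc
    have hsplit : ∀ (g : Fin J → ℝ), ∑ m, g m * x s m
        = g j * x s j + ∑ m ∈ Finset.univ.erase j, g m * x s m := fun g =>
      (Finset.add_sum_erase _ (fun m => g m * x s m) (Finset.mem_univ j)).symm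
    have herase : ∀ t : ℝ, ∑ m ∈ Finset.univ.erase j, Function.update α j t m * x s m = c :=
      fun t => Finset.sum_congr rfl fun m hm => by
        rw [Function.update_of_ne (Finset.ne_of_mem_erase hm)]
    have hlamt : ∀ t, lam (Function.update α j t) s = Real.exp (t * x s j + c) := by
      intro t
      rw [hlam, hsplit, herase, Function.update_self]
    have hlamval : lam α s = Real.exp (α j * x s j + c) := by
      rw [hlam, hsplit]
    have hlamd : HasDerivAt (fun t => lam (Function.update α j t) s)
        (lam α s * x s j) (α j) := by
      have h1 : HasDerivAt (fun t : ℝ => t * x s j + c) (x s j) (α j) := by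
        simpa using ((hasDerivAt_id (α j)).mul_const (x s j)).add_const c
      have h2 := h1.exp
      have hfun : (fun t => lam (Function.update α j t) s)
          = fun t => Real.exp (t * x s j + c) := funext hlamt
      rw [hfun, hlamval]
      exact h2
    have hb : (0:ℝ) < 1 - G η i := hbase i
    have hfun : (fun t => R η (Function.update α j t) i s)
        = fun t => Real.exp (Real.log (1 - G η i) * lam (Function.update α j t) s) :=
      funext fun t => by rw [hR, Real.rpow_def_of_pos hb]
    have hd := (hlamd.const_mul (Real.log (1 - G η i))).exp
    rw [hfun]
    convert hd using 1
    rw [hδα, Function.update_eq_self, ← Real.rpow_def_of_pos hb]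
    ring
  -- the two main derivative statements
  have hKcne : ∀ i s, (K i s : ℝ) ≠ 0 := fun i s => ne_of_gt (hKpos i s)
  have hmainη : ∀ u : Fin I,
      HasDerivAt (fun t => F (Function.update η u t) α)
        (-((β + 1) / (Ktot : ℝ)) * ∑ i, ∑ s,
          δη η α i s u * ((K i s : ℝ) * (1 - R η α i s) - (n i s : ℝ)) *
            ((1 - R η α i s) ^ (β - 1) + (R η α i s) ^ (β - 1))) (η u) := by
    intro u
    have hcell : ∀ i s, HasDerivAt
        (fun t => ((K i s : ℝ) / (Ktot : ℝ)) *
          ((1 - R (Function.update η u t) α i s) ^ (β + 1)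
            + (R (Function.update η u t) α i s) ^ (β + 1)
            - ((β + 1) / β) * (((n i s : ℝ) / (K i s : ℝ)) *
                  (1 - R (Function.update η u t) α i s) ^ β
                + (((K i s : ℝ) - (n i s : ℝ)) / (K i s : ℝ)) *
                  (R (Function.update η u t) α i s) ^ β)))
        (-((β + 1) / (Ktot : ℝ)) * (δη η α i s u *
          ((K i s : ℝ) * (1 - R η α i s) - (n i s : ℝ)) *
          ((1 - R η α i s) ^ (β - 1) + (R η α i s) ^ (β - 1)))) (η u) := by
      intro i s
      have h0 : 0 < (fun t => R (Function.update η u t) α i s) (η u) := by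
        simpa [Function.update_eq_self] using hRpos i s
      have h1 : (fun t => R (Function.update η u t) α i s) (η u) < 1 := by
        simpa [Function.update_eq_self] using hRlt i s
      have h := cell_deriv (nc := (n i s : ℝ)) hβ (hKcne i s) hKtne (hRdη u i s) h0 h1
      simpa [Function.update_eq_self] using h
    have hsum := HasDerivAt.fun_sum (u := Finset.univ)
      (fun i _ => HasDerivAt.fun_sum (u := Finset.univ) (fun s _ => hcell i s))
    have hfun : (fun t => F (Function.update η u t) α)
        = fun t => ∑ i, ∑ s, ((K i s : ℝ) / (Ktot : ℝ)) *
          ((1 - R (Function.update η u t) α i s) ^ (β + 1)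
            + (R (Function.update η u t) α i s) ^ (β + 1)
            - ((β + 1) / β) * (((n i s : ℝ) / (K i s : ℝ)) *
                  (1 - R (Function.update η u t) α i s) ^ β
                + (((K i s : ℝ) - (n i s : ℝ)) / (K i s : ℝ)) *
                  (R (Function.update η u t) α i s) ^ β)) :=
      funext fun t => by rw [hF]
    rw [hfun]
    refine hsum.congr_deriv ?_
    rw [Finset.mul_sum]
    exact Finset.sum_congr rfl fun i _ => by rw [Finset.mul_sum]
  have hmainα : ∀ j : Fin J,
      HasDerivAt (fun t => F η (Function.update α j t))
        (-((β + 1) / (Ktot : ℝ)) * ∑ i, ∑ s,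
          δα η α i s j * ((K i s : ℝ) * (1 - R η α i s) - (n i s : ℝ)) *
            ((1 - R η α i s) ^ (β - 1) + (R η α i s) ^ (β - 1))) (α j) := by
    intro j
    have hcell : ∀ i s, HasDerivAt
        (fun t => ((K i s : ℝ) / (Ktot : ℝ)) *
          ((1 - R η (Function.update α j t) i s) ^ (β + 1)
            + (R η (Function.update α j t) i s) ^ (β + 1)
            - ((β + 1) / β) * (((n i s : ℝ) / (K i s : ℝ)) *
                  (1 - R η (Function.update α j t) i s) ^ β
                + (((K i s : ℝ) - (n i s : ℝ)) / (K i s : ℝ)) *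
                  (R η (Function.update α j t) i s) ^ β)))
        (-((β + 1) / (Ktot : ℝ)) * (δα η α i s j *
          ((K i s : ℝ) * (1 - R η α i s) - (n i s : ℝ)) *
          ((1 - R η α i s) ^ (β - 1) + (R η α i s) ^ (β - 1)))) (α j) := by
      intro i s
      have h0 : 0 < (fun t => R η (Function.update α j t) i s) (α j) := by
        simpa [Function.update_eq_self] using hRpos i s
      have h1 : (fun t => R η (Function.update α j t) i s) (α j) < 1 := by
        simpa [Function.update_eq_self] using hRlt i s
      have h := cell_deriv (nc := (n i s : ℝ)) hβ (hKcne i s) hKtne (hRdα j i s) h0 h1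
      simpa [Function.update_eq_self] using h
    have hsum := HasDerivAt.fun_sum (u := Finset.univ)
      (fun i _ => HasDerivAt.fun_sum (u := Finset.univ) (fun s _ => hcell i s))
    have hfun : (fun t => F η (Function.update α j t))
        = fun t => ∑ i, ∑ s, ((K i s : ℝ) / (Ktot : ℝ)) *
          ((1 - R η (Function.update α j t) i s) ^ (β + 1)
            + (R η (Function.update α j t) i s) ^ (β + 1)
            - ((β + 1) / β) * (((n i s : ℝ) / (K i s : ℝ)) *
                  (1 - R η (Function.update α j t) i s) ^ β
                + (((K i s : ℝ) - (n i s : ℝ)) / (K i s : ℝ)) *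
                  (R η (Function.update α j t) i s) ^ β)) :=
      funext fun t => by rw [hF]
    rw [hfun]
    refine hsum.congr_deriv ?_
    rw [Finset.mul_sum]
    exact Finset.sum_congr rfl fun i _ => by rw [Finset.mul_sum]
  have hcoef : -((β + 1) / (Ktot : ℝ)) ≠ 0 := by
    have : (0:ℝ) < β + 1 := by linarith
    simp only [ne_eq, neg_eq_zero, div_eq_zero_iff]
    push_neg
    exact ⟨ne_of_gt this, hKtne⟩
  refine ⟨hmainη, hmainα, ?_⟩
  constructor
  · rintro ⟨h1, h2⟩
    constructor
    · intro u
      have := (hmainη u).unique (h1 u)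
      exact (mul_eq_zero.mp this).resolve_left hcoef
    · intro j
      have := (hmainα j).unique (h2 j)
      exact (mul_eq_zero.mp this).resolve_left hcoef
  · rintro ⟨h1, h2⟩
    constructor
    · intro u
      have := hmainη u
      rwa [h1 u, mul_zero] at this
    · intro j
      have := hmainα j
      rwa [h2 j, mul_zero] at this
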